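/- Let X₁,…,X_q be i.i.d. integrable random vectors in ℝ^d with finite second moments, let g ∈ ℝ^d, F ⊆ {1,…,d} with complement F^c, μ > 0, and nonnegative constants ε_F, ε_{F^c}, ε_abs, ε_μ. Suppose (i) ‖E[(X₁)_F] − g_F‖² ≤ ε_μ μ², and (ii) E‖(X₁)_F‖² ≤ ε_F‖g_F‖² + ε_{F^c}‖g_{F^c}‖² + ε_abs μ². Let X̄ = (1/q)Σ_{i=1}^q X_i. Then: (a) ‖E[X̄_F] − g_F‖² ≤ ε_μ μ², and (b) E‖X̄_F‖² ≤ (ε_F/q + 2)‖g_F‖² + (ε_{F^c}/q)‖g_{F^c}‖² + (ε_abs/q + 2ε_μ)μ². -/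

import Mathlib

open MeasureTheory ProbabilityTheory

noncomputable section

/-- restriction of a vector to a support `F` (coordinates outside `F` set to 0) -/
def restr {d : ℕ} (F : Finset (Fin d)) (v : EuclideanSpace ℝ (Fin d)) :
    EuclideanSpace ℝ (Fin d) :=
  WithLp.toLp 2 (fun i => if i ∈ F then v i else 0)

namespace BatchAux

variable {d : ℕ}

def restrCLM (F : Finset (Fin d)) : EuclideanSpace ℝ (Fin d) →L[ℝ] EuclideanSpace ℝ (Fin d) :=
  LinearMap.toContinuousLinearMap
    { toFun := restr F
      map_add' := fun u v => by
        ext i; by_cases h : i ∈ F <;> simp [restr, h]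
      map_smul' := fun c v => by
        ext i; by_cases h : i ∈ F <;> simp [restr, h] }

@[simp] lemma restrCLM_apply (F : Finset (Fin d)) (v : EuclideanSpace ℝ (Fin d)) :
    restrCLM F v = restr F v := rfl

lemma norm_restr_le (F : Finset (Fin d)) (v : EuclideanSpace ℝ (Fin d)) :
    ‖restr F v‖ ≤ ‖v‖ := by
  rw [EuclideanSpace.norm_eq, EuclideanSpace.norm_eq]
  apply Real.sqrt_le_sqrt
  apply Finset.sum_le_sum
  intro i _
  by_cases h : i ∈ F <;> simp [restr, h]
  positivity

lemma coord_le_norm (v : EuclideanSpace ℝ (Fin d)) (k : Fin d) : ‖v k‖ ≤ ‖v‖ := by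
  rw [EuclideanSpace.norm_eq, show ‖v k‖ = Real.sqrt (‖v k‖ ^ 2) from (Real.sqrt_sq (norm_nonneg _)).symm]
  exact Real.sqrt_le_sqrt (Finset.single_le_sum (fun i _ => sq_nonneg ‖v i‖) (Finset.mem_univ k))

end BatchAux

open BatchAux

/-- Batching lemma: averaging `q` i.i.d. copies of a gradient estimator preserves the bias
bound and reduces the second-moment bound. -/
theorem batching_lemma (d q : ℕ) (hq : 0 < q)
    {Ω : Type} [MeasurableSpace Ω] (P : Measure Ω) [IsProbabilityMeasure P]
    (X : Fin q → Ω → EuclideanSpace ℝ (Fin d))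
    (hmeas : ∀ i, Measurable (X i))
    (hindep : iIndepFun X P)
    (hident : ∀ i j, IdentDistrib (X i) (X j) P P)
    (hint : ∀ i, Integrable (X i) P)
    (hL2 : ∀ i, MemLp (X i) 2 P)
    (g : EuclideanSpace ℝ (Fin d)) (F : Finset (Fin d))
    (μ εF εFc εabs εμ : ℝ) (hμ : 0 < μ)
    (hεF : 0 ≤ εF) (hεFc : 0 ≤ εFc) (hεabs : 0 ≤ εabs) (hεμ : 0 ≤ εμ)
    (hbias : ‖(∫ ω, restr F (X ⟨0, hq⟩ ω) ∂P) - restr F g‖ ^ 2 ≤ εμ * μ ^ 2)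
    (hmoment : ∫ ω, ‖restr F (X ⟨0, hq⟩ ω)‖ ^ 2 ∂P ≤
      εF * ‖restr F g‖ ^ 2 + εFc * ‖restr Fᶜ g‖ ^ 2 + εabs * μ ^ 2) :
    (‖(∫ ω, restr F ((q : ℝ)⁻¹ • ∑ i, X i ω) ∂P) - restr F g‖ ^ 2 ≤ εμ * μ ^ 2) ∧
    (∫ ω, ‖restr F ((q : ℝ)⁻¹ • ∑ i, X i ω)‖ ^ 2 ∂P ≤
      (εF / q + 2) * ‖restr F g‖ ^ 2 + (εFc / q) * ‖restr Fᶜ g‖ ^ 2 +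
        (εabs / q + 2 * εμ) * μ ^ 2) := by
  classical
  have hq0 : (q : ℝ) ≠ 0 := Nat.cast_ne_zero.mpr hq.ne'
  have hqpos : (0 : ℝ) < q := Nat.cast_pos.mpr hq
  set i0 : Fin q := ⟨0, hq⟩ with hi0
  set Y : Fin q → Ω → EuclideanSpace ℝ (Fin d) := fun i ω => restr F (X i ω) with hYdef
  have hYmeas : ∀ i, Measurable (Y i) := fun i =>
    (restrCLM F).continuous.measurable.comp (hmeas i)
  have hYL2 : ∀ i, MemLp (Y i) 2 P := fun i =>
    MemLp.of_le (hL2 i) (hYmeas i).aestronglyMeasurable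
      (Filter.Eventually.of_forall fun ω => by
        simpa using norm_restr_le F (X i ω))
  have hYint : ∀ i, Integrable (Y i) P := fun i => (hYL2 i).integrable one_le_two
  set m : EuclideanSpace ℝ (Fin d) := ∫ ω, Y i0 ω ∂P with hm
  have hYident : ∀ i j, IdentDistrib (Y i) (Y j) P P := fun i j =>
    (hident i j).comp (restrCLM F).continuous.measurable
  have hmeanY : ∀ i, ∫ ω, Y i ω ∂P = m := fun i => (hYident i i0).integral_eq
  -- the mean of the average equals m
  have key_mean : (∫ ω, restr F ((q : ℝ)⁻¹ • ∑ i, X i ω) ∂P) = m := by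
    have h1 : (fun ω => restr F ((q : ℝ)⁻¹ • ∑ i, X i ω)) =
        fun ω => (q : ℝ)⁻¹ • ∑ i, Y i ω := by
      funext ω
      rw [← restrCLM_apply, _root_.map_smul, map_sum]
      simp [hYdef]
    rw [h1, integral_smul, integral_finset_sum _ (fun i _ => hYint i)]
    simp only [hmeanY]
    rw [Finset.sum_const, Finset.card_univ, Fintype.card_fin,
      ← Nat.cast_smul_eq_nsmul ℝ, smul_smul, inv_mul_cancel₀ hq0, one_smul]
  have hbias' : ‖m - restr F g‖ ^ 2 ≤ εμ * μ ^ 2 := hbias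
  refine ⟨by rw [key_mean]; exact hbias', ?_⟩
  -- second moment part
  set S : ℝ := ∫ ω, ‖Y i0 ω‖ ^ 2 ∂P with hS
  have hsq : ∀ i, Integrable (fun ω => ‖Y i ω‖ ^ 2) P := fun i =>
    (memLp_two_iff_integrable_sq_norm (hYmeas i).aestronglyMeasurable).1 (hYL2 i)
  have hnormsq : ∀ i, ∫ ω, ‖Y i ω‖ ^ 2 ∂P = S := fun i =>
    ((hYident i i0).comp (measurable_norm.pow_const 2)).integral_eq
  have hInt_inner : ∀ i j, Integrable (fun ω => inner ℝ (Y i ω) (Y j ω)) P := by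
    intro i j
    refine Integrable.mono' (((hsq i).add (hsq j)).div_const 2)
      ((hYmeas i).inner (hYmeas j)).aestronglyMeasurable
      (Filter.Eventually.of_forall fun ω => ?_)
    have h1 := abs_real_inner_le_norm (Y i ω) (Y j ω)
    have h2 : ‖Y i ω‖ * ‖Y j ω‖ ≤ (‖Y i ω‖ ^ 2 + ‖Y j ω‖ ^ 2) / 2 := by nlinarith [sq_nonneg (‖Y i ω‖ - ‖Y j ω‖)]
    simpa [Real.norm_eq_abs] using h1.trans h2
  -- coordinates
  have hZmeas : ∀ i k, Measurable (fun ω => Y i ω k) := fun i k =>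
    (EuclideanSpace.proj (𝕜 := ℝ) k).continuous.measurable.comp (hYmeas i)
  have hZL2 : ∀ i k, MemLp (fun ω => Y i ω k) 2 P := by
    intro i k
    refine MemLp.of_le (hYL2 i) (hZmeas i k).aestronglyMeasurable
      (Filter.Eventually.of_forall fun ω => ?_)
    simpa using coord_le_norm (Y i ω) k
  have hZint : ∀ i k, Integrable (fun ω => Y i ω k) P := fun i k =>
    (hZL2 i k).integrable one_le_two
  have hZmean : ∀ i k, ∫ ω, Y i ω k ∂P = m k := by
    intro i k
    have h := (EuclideanSpace.proj (𝕜 := ℝ) k).integral_comp_comm (hYint i)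
    simpa [hmeanY i] using h
  -- cross terms
  have hcross : ∀ i j, i ≠ j → ∫ ω, inner ℝ (Y i ω) (Y j ω) ∂P = ‖m‖ ^ 2 := by
    intro i j hij
    have φmeas : Measurable (fun v : EuclideanSpace ℝ (Fin d) => restr F v) :=
      (restrCLM F).continuous.measurable
    have hindpair : ∀ k, IndepFun (fun ω => Y i ω k) (fun ω => Y j ω k) P := by
      intro k
      exact (hindep.indepFun hij).comp
        ((EuclideanSpace.proj (𝕜 := ℝ) k).continuous.measurable.comp φmeas) ((EuclideanSpace.proj (𝕜 := ℝ) k).continuous.measurable.comp φmeas)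
    have hfun : ∀ ω, inner ℝ (Y i ω) (Y j ω) = ∑ k, Y i ω k * Y j ω k := by
      intro ω
      simp [PiLp.inner_apply, RCLike.inner_apply, conj_trivial, mul_comm]
    calc ∫ ω, inner ℝ (Y i ω) (Y j ω) ∂P
        = ∫ ω, ∑ k, Y i ω k * Y j ω k ∂P := by simp_rw [hfun]
      _ = ∑ k, ∫ ω, Y i ω k * Y j ω k ∂P := by
          refine integral_finset_sum _ fun k _ => ?_
          exact (hindpair k).integrable_mul (hZint i k) (hZint j k) |>.congr (Filter.Eventually.of_forall fun ω => rfl)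
      _ = ∑ k, m k * m k := by
          refine Finset.sum_congr rfl fun k _ => ?_
          have h' : ∫ ω, Y i ω k * Y j ω k ∂P = (∫ ω, Y i ω k ∂P) * ∫ ω, Y j ω k ∂P :=
            (hindpair k).integral_fun_mul_eq_mul_integral (hZint i k).aestronglyMeasurable (hZint j k).aestronglyMeasurable
          rw [h', hZmean i k, hZmean j k]
      _ = ‖m‖ ^ 2 := by
          rw [← real_inner_self_eq_norm_sq, PiLp.inner_apply]
          simp [RCLike.inner_apply, conj_trivial, mul_comm, sq]
  -- expansion of the second moment
  have expand : ∫ ω, ‖restr F ((q : ℝ)⁻¹ • ∑ i, X i ω)‖ ^ 2 ∂P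
      = ((q : ℝ)⁻¹) ^ 2 * ∑ i, ∑ j, ∫ ω, inner ℝ (Y i ω) (Y j ω) ∂P := by
    have h1 : ∀ ω, ‖restr F ((q : ℝ)⁻¹ • ∑ i, X i ω)‖ ^ 2
        = ((q : ℝ)⁻¹) ^ 2 * ∑ i, ∑ j, inner ℝ (Y i ω) (Y j ω) := by
      intro ω
      rw [← restrCLM_apply, _root_.map_smul, map_sum, norm_smul, mul_pow]
      congr 1
      · rw [Real.norm_eq_abs, sq_abs]
      · rw [← real_inner_self_eq_norm_sq, sum_inner]
        refine Finset.sum_congr rfl fun i _ => ?_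
        rw [inner_sum]
        simp [hYdef]
    simp_rw [h1]
    rw [integral_const_mul]
    congr 1
    rw [integral_finset_sum _ fun i _ => integrable_finset_sum _ fun j _ => hInt_inner i j]
    exact Finset.sum_congr rfl fun i _ =>
      integral_finset_sum _ fun j _ => hInt_inner i j
  -- evaluate the double sum
  have hsum : ∑ i : Fin q, ∑ j : Fin q, ∫ ω, inner ℝ (Y i ω) (Y j ω) ∂P
      = q * S + ((q : ℝ) ^ 2 - q) * ‖m‖ ^ 2 := by
    have hij : ∀ i j : Fin q, ∫ ω, inner ℝ (Y i ω) (Y j ω) ∂P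
        = if i = j then S else ‖m‖ ^ 2 := by
      intro i j
      by_cases h : i = j
      · subst h
        simp only [if_pos rfl]
        rw [← hnormsq i]
        refine integral_congr_ae (Filter.Eventually.of_forall fun ω => ?_)
        exact real_inner_self_eq_norm_sq _
      · rw [if_neg h]; exact hcross i j h
    simp_rw [hij]
    have hrow : ∀ i : Fin q, (∑ j : Fin q, if i = j then S else ‖m‖ ^ 2)
        = S + ((q : ℝ) - 1) * ‖m‖ ^ 2 := by
      intro i
      have : ∀ j : Fin q, (if i = j then S else ‖m‖ ^ 2)
          = (if i = j then S - ‖m‖ ^ 2 else 0) + ‖m‖ ^ 2 := by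
        intro j; split <;> ring
      simp_rw [this]
      rw [Finset.sum_add_distrib, Finset.sum_ite_eq, if_pos (Finset.mem_univ i),
        Finset.sum_const, Finset.card_univ, Fintype.card_fin, nsmul_eq_mul]
      ring
    simp_rw [hrow, Finset.sum_const, Finset.card_univ, Fintype.card_fin, nsmul_eq_mul]
    ring
  -- final arithmetic
  rw [expand, hsum]
  have hSbound : S ≤ εF * ‖restr F g‖ ^ 2 + εFc * ‖restr Fᶜ g‖ ^ 2 + εabs * μ ^ 2 := hmoment
  have hmbound : ‖m‖ ^ 2 ≤ 2 * (εμ * μ ^ 2) + 2 * ‖restr F g‖ ^ 2 := by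
    have h1 : ‖m‖ ≤ ‖m - restr F g‖ + ‖restr F g‖ := by
      simpa using norm_add_le (m - restr F g) (restr F g)
    have h2 : ‖m‖ ^ 2 ≤ (‖m - restr F g‖ + ‖restr F g‖) ^ 2 :=
      pow_le_pow_left₀ (norm_nonneg m) h1 2
    nlinarith [h2, hbias', sq_nonneg (‖m - restr F g‖ - ‖restr F g‖)]
  have hm0 : (0 : ℝ) ≤ ‖m‖ ^ 2 := sq_nonneg _
  have hexp : ((q : ℝ)⁻¹) ^ 2 * (q * S + ((q : ℝ) ^ 2 - q) * ‖m‖ ^ 2)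
      = S / q + (1 - 1 / q) * ‖m‖ ^ 2 := by
    field_simp
  rw [hexp]
  have hSq : S / q ≤ εF / q * ‖restr F g‖ ^ 2 + εFc / q * ‖restr Fᶜ g‖ ^ 2 + εabs / q * μ ^ 2 := by
    have h1 : S / q ≤ (εF * ‖restr F g‖ ^ 2 + εFc * ‖restr Fᶜ g‖ ^ 2 + εabs * μ ^ 2) / q := by
      gcongr
    calc S / q ≤ _ := h1
      _ = _ := by ring
  have hCb : (1 - 1 / (q : ℝ)) * ‖m‖ ^ 2 ≤ 2 * (εμ * μ ^ 2) + 2 * ‖restr F g‖ ^ 2 := by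
    have h2 : (1 - 1 / (q : ℝ)) ≤ 1 := by
      have : (0 : ℝ) ≤ 1 / q := by positivity
      linarith
    calc (1 - 1 / (q : ℝ)) * ‖m‖ ^ 2 ≤ 1 * ‖m‖ ^ 2 := by
          exact mul_le_mul_of_nonneg_right h2 hm0
      _ = ‖m‖ ^ 2 := one_mul _
      _ ≤ _ := hmbound
  have hRHS : (εF / q + 2) * ‖restr F g‖ ^ 2 + (εFc / q) * ‖restr Fᶜ g‖ ^ 2 +
        (εabs / q + 2 * εμ) * μ ^ 2
      = (εF / q * ‖restr F g‖ ^ 2 + εFc / q * ‖restr Fᶜ g‖ ^ 2 + εabs / q * μ ^ 2)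
        + (2 * (εμ * μ ^ 2) + 2 * ‖restr F g‖ ^ 2) := by ring
  rw [hRHS]
  exact add_le_add hSq hCb
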